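/- Let p be an odd prime, n ≥ 0 an integer, R = p^{n - 1/(p-1)}, and let μ, ν be bounded distributions on the Tate algebra of radius R over ℂ_p. Define the Fourier transform F(μ) to be the formal power series Σ_k (μ(x^k)/k!) T^k ∈ ℂ_p[[T]]. Then: (1) F is injective, i.e. F(μ) = 0 implies μ = 0; (2) F(μ*ν) = F(μ)·F(ν) as formal power series, where μ*ν is the convolution with moments (μ*ν)(x^k) = Σ_{m=0}^{k} binom(k,m) μ(x^m) ν(x^{k-m}); and (3) F sends the Dirac distribution at 0 (the functional f ↦ f(0), i.e. f ↦ a_0) to the constant power series 1. In particular the bounded distributions on the Tate algebra of radius R form a commutative integral domain under convolution. -/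

import Mathlib

open Filter Topology

/-- A coefficient sequence belongs to the Tate algebra of radius `R`:
`‖a k‖ R^k → 0`. -/
def IsTate {K : Type*} [NormedField K] (R : ℝ) (a : ℕ → K) : Prop :=
  Filter.Tendsto (fun k => ‖a k‖ * R ^ k) Filter.atTop (nhds 0)

/-- The (Gauss = sup) norm on the Tate algebra of radius `R`:
`‖∑ a_k x^k‖ = sup_k ‖a_k‖ R^k`. -/
noncomputable def tateNorm {K : Type*} [NormedField K] (R : ℝ) (a : ℕ → K) : ℝ :=
  ⨆ k : ℕ, ‖a k‖ * R ^ k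

/-- A bounded distribution on the Tate algebra of radius `R` over `K`: a `K`-linear
functional on the Tate algebra (identified with its coefficient sequences) that is
bounded with respect to the Gauss norm. -/
structure BDist (K : Type*) [NormedField K] (R : ℝ) where
  toFun : {a : ℕ → K // IsTate R a} → K
  map_add' : ∀ a b c : {a : ℕ → K // IsTate R a},
    (c : ℕ → K) = (a : ℕ → K) + (b : ℕ → K) → toFun c = toFun a + toFun b
  map_smul' : ∀ (r : K) (a b : {a : ℕ → K // IsTate R a}),
    (b : ℕ → K) = r • (a : ℕ → K) → toFun b = r * toFun a
  bound' : ∃ C : ℝ, ∀ a : {a : ℕ → K // IsTate R a}, ‖toFun a‖ ≤ C * tateNorm R (a : ℕ → K)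

/-- The monomial `x^k` as an element of the Tate algebra of radius `R`. -/
noncomputable def tateMono {K : Type*} [NormedField K] (R : ℝ) (k : ℕ) :
    {a : ℕ → K // IsTate R a} :=
  ⟨fun j => if j = k then 1 else 0, by
    apply Filter.Tendsto.congr' _ tendsto_const_nhds
    filter_upwards [Filter.eventually_ge_atTop (k + 1)] with j hj
    have hjk : j ≠ k := by omega
    simp [hjk]⟩

/-- The Fourier transform of a bounded distribution: the formal power series
`F(μ) = ∑_k (μ(x^k)/k!) T^k`. -/
noncomputable def fourierT {K : Type*} [NormedField K] {R : ℝ} (μ : BDist K R) :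
    PowerSeries K :=
  PowerSeries.mk fun k => μ.toFun (tateMono R k) / (k.factorial : K)

-- helpers
noncomputable def partialEl {K : Type*} [NormedField K] {R : ℝ}
    (x : {a : ℕ → K // IsTate R a}) (N : ℕ) : {a : ℕ → K // IsTate R a} :=
  ⟨fun j => if j < N then x.1 j else 0, by
    apply Filter.Tendsto.congr' _ tendsto_const_nhds
    filter_upwards [Filter.eventually_ge_atTop N] with j hj
    have : ¬ j < N := by omega
    simp [this]⟩

noncomputable def tailEl {K : Type*} [NormedField K] {R : ℝ}
    (x : {a : ℕ → K // IsTate R a}) (N : ℕ) : {a : ℕ → K // IsTate R a} :=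
  ⟨fun j => if j < N then 0 else x.1 j, by
    apply Filter.Tendsto.congr' _ x.2
    filter_upwards [Filter.eventually_ge_atTop N] with j hj
    have : ¬ j < N := by omega
    simp [this]⟩

noncomputable def smulMono {K : Type*} [NormedField K] (R : ℝ) (r : K) (k : ℕ) :
    {a : ℕ → K // IsTate R a} :=
  ⟨fun j => if j = k then r else 0, by
    apply Filter.Tendsto.congr' _ tendsto_const_nhds
    filter_upwards [Filter.eventually_ge_atTop (k + 1)] with j hj
    have hjk : j ≠ k := by omega
    simp [hjk]⟩

lemma toFun_smulMono {K : Type*} [NormedField K] {R : ℝ} (μ : BDist K R) (r : K) (k : ℕ) :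
    μ.toFun (smulMono R r k) = r * μ.toFun (tateMono R k) := by
  apply μ.map_smul' r (tateMono R k) (smulMono R r k)
  funext j
  simp only [smulMono, tateMono, Pi.smul_apply, smul_eq_mul]
  split <;> simp

lemma toFun_partial {K : Type*} [NormedField K] {R : ℝ} (μ : BDist K R)
    (x : {a : ℕ → K // IsTate R a}) (N : ℕ) :
    μ.toFun (partialEl x N) = ∑ k ∈ Finset.range N, x.1 k * μ.toFun (tateMono R k) := by
  induction N with
  | zero =>
    have h0 : ((partialEl x 0 : {a : ℕ → K // IsTate R a}) : ℕ → K)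
        = (0 : K) • ((x : ℕ → K)) := by
      funext j; simp [partialEl]
    rw [μ.map_smul' 0 x (partialEl x 0) h0]
    simp
  | succ N ih =>
    have hadd : ((partialEl x (N+1) : {a : ℕ → K // IsTate R a}) : ℕ → K)
        = ((partialEl x N : {a : ℕ → K // IsTate R a}) : ℕ → K)
          + ((smulMono R (x.1 N) N : {a : ℕ → K // IsTate R a}) : ℕ → K) := by
      funext j
      simp only [partialEl, smulMono, Pi.add_apply]
      rcases lt_trichotomy j N with h | h | h
      · simp [h, Nat.lt_succ_of_lt h, Nat.ne_of_lt h]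
      · subst h; simp
      · have h1 : ¬ j < N := by omega
        have h2 : ¬ j < N + 1 := by omega
        have h3 : j ≠ N := by omega
        simp [h1, h2, h3]
    rw [μ.map_add' _ _ _ hadd, ih, toFun_smulMono, Finset.sum_range_succ]

lemma tateNorm_nonneg {K : Type*} [NormedField K] {R : ℝ} (hR : 0 < R) (a : ℕ → K) :
    0 ≤ tateNorm R a :=
  Real.iSup_nonneg fun k => mul_nonneg (norm_nonneg _) (by positivity)

lemma moments_zero {K : Type*} [NormedField K] {R : ℝ} (hR : 0 < R) (μ : BDist K R)
    (h : ∀ k, μ.toFun (tateMono R k) = 0) (a : {a : ℕ → K // IsTate R a}) :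
    μ.toFun a = 0 := by
  obtain ⟨C, hC⟩ := μ.bound'
  set C' : ℝ := max C 1 with hC'def
  have hC'pos : 0 < C' := lt_of_lt_of_le one_pos (le_max_right _ _)
  have hC' : ∀ b : {a : ℕ → K // IsTate R a}, ‖μ.toFun b‖ ≤ C' * tateNorm R (b : ℕ → K) := by
    intro b
    refine (hC b).trans (mul_le_mul_of_nonneg_right (le_max_left _ _) (tateNorm_nonneg hR _))
  -- μ a = μ (tail N) for every N
  have key : ∀ N, μ.toFun a = μ.toFun (tailEl a N) := by
    intro N
    have hadd : ((a : {a : ℕ → K // IsTate R a}) : ℕ → K)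
        = ((partialEl a N : {a : ℕ → K // IsTate R a}) : ℕ → K)
          + ((tailEl a N : {a : ℕ → K // IsTate R a}) : ℕ → K) := by
      funext j
      simp only [partialEl, tailEl, Pi.add_apply]
      split <;> simp
    rw [μ.map_add' _ _ _ hadd, toFun_partial]
    simp [h]
  have hzero : ‖μ.toFun a‖ ≤ 0 := by
    apply le_of_forall_pos_le_add
    intro ε hε
    rw [zero_add]
    have hε' : 0 < ε / C' := div_pos hε hC'pos
    have := a.2
    rw [IsTate, Metric.tendsto_atTop] at this
    obtain ⟨N, hN⟩ := this (ε / C') hε'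
    have htail : tateNorm R ((tailEl a N : {a : ℕ → K // IsTate R a}) : ℕ → K) ≤ ε / C' := by
      apply ciSup_le
      intro j
      simp only [tailEl]
      split
      · simpa using le_of_lt hε'
      · rename_i hj
        have hj' : N ≤ j := by omega
        have := hN j hj'
        rw [Real.dist_eq, sub_zero, abs_of_nonneg (mul_nonneg (norm_nonneg _) (by positivity))] at this
        exact le_of_lt this
    calc ‖μ.toFun a‖ = ‖μ.toFun (tailEl a N)‖ := by rw [key N]
      _ ≤ C' * tateNorm R ((tailEl a N : {a : ℕ → K // IsTate R a}) : ℕ → K) := hC' _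
      _ ≤ C' * (ε / C') := by
          exact mul_le_mul_of_nonneg_left htail (le_of_lt hC'pos)
      _ = ε := by field_simp
  have := le_antisymm hzero (norm_nonneg _)
  exact norm_eq_zero.mp this

/-- The Fourier transform `F(μ) = ∑ (μ(x^k)/k!) T^k` on bounded distributions on the
Tate algebra of radius `R = p^{n-1/(p-1)}` is injective, takes convolution (defined via
the moments `(μ*ν)(x^k) = ∑_{m ≤ k} (k choose m) μ(x^m) ν(x^{k-m})`) to the product of
power series, and takes the Dirac distribution at `0` (i.e. `f ↦ a_0`) to `1`.
In particular the bounded distributions form an integral domain under convolution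
(no zero divisors).  Here `K` plays the role of `ℂ_p`. -/
theorem statement13 (p : ℕ) [Fact p.Prime] (hodd : Odd p)
    {K : Type*} [NormedField K] [CompleteSpace K] [IsAlgClosed K] [Algebra ℚ_[p] K]
    [CharZero K]
    (hnorm : ∀ x : ℚ_[p], ‖(algebraMap ℚ_[p] K) x‖ = ‖x‖)
    (hna : ∀ x y : K, ‖x + y‖ ≤ max ‖x‖ ‖y‖)
    (n : ℕ) (R : ℝ) (hR : R = (p : ℝ) ^ ((n : ℝ) - 1 / ((p : ℝ) - 1))) :
    (∀ μ : BDist K R, fourierT μ = 0 → ∀ a : {a : ℕ → K // IsTate R a}, μ.toFun a = 0) ∧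
    (∀ μ ν σ : BDist K R,
        (∀ k : ℕ, σ.toFun (tateMono R k) =
            ∑ m ∈ Finset.range (k + 1),
              (k.choose m : K) * μ.toFun (tateMono R m) * ν.toFun (tateMono R (k - m))) →
        fourierT σ = fourierT μ * fourierT ν) ∧
    (∀ δ : BDist K R, (∀ a : {a : ℕ → K // IsTate R a}, δ.toFun a = (a : ℕ → K) 0) →
        fourierT δ = 1) ∧
    (∀ μ ν σ : BDist K R,
        (∀ k : ℕ, σ.toFun (tateMono R k) =
            ∑ m ∈ Finset.range (k + 1),
              (k.choose m : K) * μ.toFun (tateMono R m) * ν.toFun (tateMono R (k - m))) →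
        (∀ a : {a : ℕ → K // IsTate R a}, σ.toFun a = 0) →
        (∀ a : {a : ℕ → K // IsTate R a}, μ.toFun a = 0) ∨
        (∀ a : {a : ℕ → K // IsTate R a}, ν.toFun a = 0)) := by
  have hp : (0 : ℝ) < p := by exact_mod_cast (Fact.out : p.Prime).pos
  have hRpos : 0 < R := hR ▸ Real.rpow_pos_of_pos hp _
  -- injectivity
  have inj : ∀ μ : BDist K R, fourierT μ = 0 →
      ∀ a : {a : ℕ → K // IsTate R a}, μ.toFun a = 0 := by
    intro μ hμ
    apply moments_zero hRpos
    intro k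
    have := congrArg (PowerSeries.coeff (R := K) k) hμ
    simp only [fourierT, PowerSeries.coeff_mk, map_zero] at this
    have hfac : (k.factorial : K) ≠ 0 := Nat.cast_ne_zero.mpr k.factorial_ne_zero
    field_simp at this
    simpa using this
  -- convolution
  have conv : ∀ μ ν σ : BDist K R,
      (∀ k : ℕ, σ.toFun (tateMono R k) =
          ∑ m ∈ Finset.range (k + 1),
            (k.choose m : K) * μ.toFun (tateMono R m) * ν.toFun (tateMono R (k - m))) →
      fourierT σ = fourierT μ * fourierT ν := by
    intro μ ν σ hσ
    ext k
    rw [PowerSeries.coeff_mul]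
    simp only [fourierT, PowerSeries.coeff_mk]
    rw [Finset.Nat.sum_antidiagonal_eq_sum_range_succ_mk, hσ, Finset.sum_div]
    apply Finset.sum_congr rfl
    intro m hm
    have hmk : m ≤ k := Nat.lt_succ_iff.mp (Finset.mem_range.mp hm)
    have h1 : (m.factorial : K) ≠ 0 := Nat.cast_ne_zero.mpr m.factorial_ne_zero
    have h2 : ((k - m).factorial : K) ≠ 0 := Nat.cast_ne_zero.mpr (k - m).factorial_ne_zero
    have h3 : (k.factorial : K) ≠ 0 := Nat.cast_ne_zero.mpr k.factorial_ne_zero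
    rw [Nat.cast_choose K hmk]
    field_simp
  refine ⟨inj, conv, ?_, ?_⟩
  · intro δ hδ
    ext k
    simp only [fourierT, PowerSeries.coeff_mk, hδ, tateMono, PowerSeries.coeff_one]
    rcases eq_or_ne k 0 with h | h
    · subst h; simp
    · have : (0 : ℕ) ≠ k := fun e => h e.symm
      simp [this, h]
  · intro μ ν σ hσ hσ0
    have h0 : fourierT σ = 0 := by
      ext k
      simp [fourierT, hσ0]
    have := conv μ ν σ hσ
    rw [h0] at this
    rcases mul_eq_zero.mp this.symm with h | h
    · exact Or.inl (inj μ h)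
    · exact Or.inr (inj ν h)
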